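/- Any 2-fold bracket {{−,−}} on the free algebra R_ℓ is given by the master formula: for all f,g ∈ R_ℓ, {{f,g}} = Σ_{i,j=1}^{ℓ} (∂g/∂x_j) • {{x_i, x_j}} • ((∂f/∂x_i))^σ, where • is the associative product (u⊗v)•(x⊗y) = (ux)⊗(yv) on R_ℓ⊗R_ℓ and (u⊗v)^σ = v⊗u. -/

import Mathlib

open TensorProduct LinearMap

section DPA

variable (𝔽 : Type) [Field 𝔽] (V : Type) [Ring V] [Algebra 𝔽 V]

/-- The swap `(u ⊗ v)^σ = v ⊗ u` on `V ⊗ V`. -/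
noncomputable abbrev swap2 : V ⊗[𝔽] V ≃ₗ[𝔽] V ⊗[𝔽] V := TensorProduct.comm 𝔽 V V

/-- The cyclic permutation `(u ⊗ v ⊗ w)^σ = w ⊗ u ⊗ v` on `V ⊗ V ⊗ V = (V ⊗ V) ⊗ V`. -/
noncomputable def sigma3 : (V ⊗[𝔽] V) ⊗[𝔽] V ≃ₗ[𝔽] (V ⊗[𝔽] V) ⊗[𝔽] V :=
  (TensorProduct.comm 𝔽 (V ⊗[𝔽] V) V).trans (TensorProduct.assoc 𝔽 V V V).symm

/-- Left multiplication `a · (u ⊗ v) = (a*u) ⊗ v` (outer bimodule structure). -/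
noncomputable def lact2 (a : V) : V ⊗[𝔽] V →ₗ[𝔽] V ⊗[𝔽] V :=
  LinearMap.rTensor V (LinearMap.mulLeft 𝔽 a)

/-- Right multiplication `(u ⊗ v) · c = u ⊗ (v*c)` (outer bimodule structure). -/
noncomputable def ract2 (c : V) : V ⊗[𝔽] V →ₗ[𝔽] V ⊗[𝔽] V :=
  LinearMap.lTensor V (LinearMap.mulRight 𝔽 c)

/-- `(u ⊗ v) ⋆₁ b = (u*b) ⊗ v`. -/
noncomputable def star1r (b : V) : V ⊗[𝔽] V →ₗ[𝔽] V ⊗[𝔽] V :=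
  LinearMap.rTensor V (LinearMap.mulRight 𝔽 b)

/-- `a ⋆₁ (u ⊗ v) = u ⊗ (a*v)`. -/
noncomputable def star1l (a : V) : V ⊗[𝔽] V →ₗ[𝔽] V ⊗[𝔽] V :=
  LinearMap.lTensor V (LinearMap.mulLeft 𝔽 a)

/-- The `•`-product on `V ⊗ V`:  `(u ⊗ v) • (x ⊗ y) = (u*x) ⊗ (y*v)`
(the multiplication of `V ⊗ Vᵒᵖ`). -/
noncomputable def bullet : V ⊗[𝔽] V →ₗ[𝔽] V ⊗[𝔽] V →ₗ[𝔽] V ⊗[𝔽] V :=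
  TensorProduct.lift
    (((TensorProduct.mapBilinear (σ₁₂ := RingHom.id 𝔽) (M := V) (N := V) (M₂ := V) (N₂ := V)).comp (LinearMap.mul 𝔽 V)).compl₂
      ((LinearMap.mul 𝔽 V).flip))

/-- A `2`-fold bracket on `V`: an `𝔽`-bilinear map `V × V → V ⊗ V` satisfying the two
Leibniz rules `{{a,bc}} = {{a,b}}·c + b·{{a,c}}` and `{{ab,c}} = {{a,c}} ⋆₁ b + a ⋆₁ {{b,c}}`. -/
def IsDoubleBracket (Br : V →ₗ[𝔽] V →ₗ[𝔽] V ⊗[𝔽] V) : Prop :=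
  (∀ a b c : V, Br a (b * c) = ract2 𝔽 V c (Br a b) + lact2 𝔽 V b (Br a c)) ∧
  (∀ a b c : V, Br (a * b) c = star1r 𝔽 V b (Br a c) + star1l 𝔽 V a (Br b c))

variable {𝔽 V}

/-- `{{a, B}}_L` : apply the bracket to the first tensor factor. -/
noncomputable def brL (Br : V →ₗ[𝔽] V →ₗ[𝔽] V ⊗[𝔽] V) (a : V) :
    V ⊗[𝔽] V →ₗ[𝔽] (V ⊗[𝔽] V) ⊗[𝔽] V :=
  LinearMap.rTensor V (Br a)

/-- `{{a, B}}_R` : apply the bracket to the second tensor factor. -/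
noncomputable def brR (Br : V →ₗ[𝔽] V →ₗ[𝔽] V ⊗[𝔽] V) (a : V) :
    V ⊗[𝔽] V →ₗ[𝔽] (V ⊗[𝔽] V) ⊗[𝔽] V :=
  (TensorProduct.assoc 𝔽 V V V).symm.toLinearMap ∘ₗ LinearMap.lTensor V (Br a)

variable (𝔽 V)

/-- `ρ₂` : swap the last two tensor factors of `V ⊗ V ⊗ V`. -/
noncomputable def rho2 : (V ⊗[𝔽] V) ⊗[𝔽] V ≃ₗ[𝔽] (V ⊗[𝔽] V) ⊗[𝔽] V :=
  (TensorProduct.assoc 𝔽 V V V).trans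
    ((TensorProduct.congr (LinearEquiv.refl 𝔽 V) (TensorProduct.comm 𝔽 V V)).trans
      (TensorProduct.assoc 𝔽 V V V).symm)

variable {𝔽 V}

/-- Conjugated bullet action used to define the actions `•ᵢ` of `V ⊗ V` on `V ⊗ V ⊗ V`. -/
noncomputable def conjAct (β : V ⊗[𝔽] V →ₗ[𝔽] V ⊗[𝔽] V →ₗ[𝔽] V ⊗[𝔽] V)
    (ρ : (V ⊗[𝔽] V) ⊗[𝔽] V ≃ₗ[𝔽] (V ⊗[𝔽] V) ⊗[𝔽] V) :
    V ⊗[𝔽] V →ₗ[𝔽] (V ⊗[𝔽] V) ⊗[𝔽] V →ₗ[𝔽] (V ⊗[𝔽] V) ⊗[𝔽] V :=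
  (LinearMap.lcomp 𝔽 _ ρ.toLinearMap) ∘ₗ
    (LinearMap.llcomp 𝔽 ((V ⊗[𝔽] V) ⊗[𝔽] V) ((V ⊗[𝔽] V) ⊗[𝔽] V) ((V ⊗[𝔽] V) ⊗[𝔽] V)
      ρ.symm.toLinearMap) ∘ₗ
    (LinearMap.rTensorHom V) ∘ₗ β

variable (𝔽 V)

/-- The right action `X •₁ A`, i.e. `(x⊗y⊗z) •₁ (a⊗b) = x⊗(y*a)⊗(b*z)`;
`bAct1R A X = X •₁ A`. -/
noncomputable def bAct1R : V ⊗[𝔽] V →ₗ[𝔽] (V ⊗[𝔽] V) ⊗[𝔽] V →ₗ[𝔽] (V ⊗[𝔽] V) ⊗[𝔽] V :=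
  conjAct (bullet 𝔽 V).flip ((sigma3 𝔽 V).trans (sigma3 𝔽 V))

/-- The left action `A •₂ X`, i.e. `(a⊗b) •₂ (x⊗y⊗z) = (a*x)⊗y⊗(z*b)`. -/
noncomputable def bAct2L : V ⊗[𝔽] V →ₗ[𝔽] (V ⊗[𝔽] V) ⊗[𝔽] V →ₗ[𝔽] (V ⊗[𝔽] V) ⊗[𝔽] V :=
  conjAct (bullet 𝔽 V) (rho2 𝔽 V)

/-- The right action `X •₃ A`, i.e. `(x⊗y⊗z) •₃ (a⊗b) = (x*a)⊗(b*y)⊗z`;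
`bAct3R A X = X •₃ A`. -/
noncomputable def bAct3R : V ⊗[𝔽] V →ₗ[𝔽] (V ⊗[𝔽] V) ⊗[𝔽] V →ₗ[𝔽] (V ⊗[𝔽] V) ⊗[𝔽] V :=
  conjAct (bullet 𝔽 V).flip (LinearEquiv.refl 𝔽 ((V ⊗[𝔽] V) ⊗[𝔽] V))

/-- `a ⋆₁ (x⊗y⊗z) = x⊗(a*y)⊗z`. -/
noncomputable def slot2L (a : V) : (V ⊗[𝔽] V) ⊗[𝔽] V →ₗ[𝔽] (V ⊗[𝔽] V) ⊗[𝔽] V :=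
  LinearMap.rTensor V (LinearMap.lTensor V (LinearMap.mulLeft 𝔽 a))

/-- `(x⊗y⊗z) ⋆₁ b = x⊗(y*b)⊗z`. -/
noncomputable def slot2R (b : V) : (V ⊗[𝔽] V) ⊗[𝔽] V →ₗ[𝔽] (V ⊗[𝔽] V) ⊗[𝔽] V :=
  LinearMap.rTensor V (LinearMap.lTensor V (LinearMap.mulRight 𝔽 b))

/-- `a ⋆₂ (x⊗y⊗z) = x⊗y⊗(a*z)`. -/
noncomputable def slot3L (a : V) : (V ⊗[𝔽] V) ⊗[𝔽] V →ₗ[𝔽] (V ⊗[𝔽] V) ⊗[𝔽] V :=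
  LinearMap.lTensor (V ⊗[𝔽] V) (LinearMap.mulLeft 𝔽 a)

/-- `(x⊗y⊗z) ⋆₂ b = (x*b)⊗y⊗z`. -/
noncomputable def slot1R (b : V) : (V ⊗[𝔽] V) ⊗[𝔽] V →ₗ[𝔽] (V ⊗[𝔽] V) ⊗[𝔽] V :=
  LinearMap.rTensor V (LinearMap.rTensor V (LinearMap.mulRight 𝔽 b))

/-- outer left: `a · (x⊗y⊗z) = (a*x)⊗y⊗z`. -/
noncomputable def slot1L (a : V) : (V ⊗[𝔽] V) ⊗[𝔽] V →ₗ[𝔽] (V ⊗[𝔽] V) ⊗[𝔽] V :=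
  LinearMap.rTensor V (LinearMap.rTensor V (LinearMap.mulLeft 𝔽 a))

/-- outer right: `(x⊗y⊗z) · b = x⊗y⊗(z*b)`. -/
noncomputable def slot3R (b : V) : (V ⊗[𝔽] V) ⊗[𝔽] V →ₗ[𝔽] (V ⊗[𝔽] V) ⊗[𝔽] V :=
  LinearMap.lTensor (V ⊗[𝔽] V) (LinearMap.mulRight 𝔽 b)

variable {𝔽 V}

/-- The triple bracket `{{a,b,c}}`. -/
noncomputable def triple (Br : V →ₗ[𝔽] V →ₗ[𝔽] V ⊗[𝔽] V) (a b c : V) :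
    (V ⊗[𝔽] V) ⊗[𝔽] V :=
  brL Br a (Br b c) + sigma3 𝔽 V (brL Br b (Br c a)) +
    sigma3 𝔽 V (sigma3 𝔽 V (brL Br c (Br a b)))

variable (𝔽 V)

/-- Skewsymmetry of a 2-fold bracket. -/
def IsSkew (Br : V →ₗ[𝔽] V →ₗ[𝔽] V ⊗[𝔽] V) : Prop :=
  ∀ a b : V, Br a b = - swap2 𝔽 V (Br b a)

/-- The span of commutators `[V,V]`. -/
def commSub : Submodule 𝔽 V := Submodule.span 𝔽 {x : V | ∃ a b : V, x = a * b - b * a}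

variable {𝔽 V}

/-- The associated bracket `{a,b} = m {{a,b}}`. -/
noncomputable def sb (Br : V →ₗ[𝔽] V →ₗ[𝔽] V ⊗[𝔽] V) (a b : V) : V :=
  LinearMap.mul' 𝔽 V (Br a b)

/-- A 2-fold derivation: `D(ab) = (Da)·b + a·(Db)`. -/
def Is2Deriv (D : V →ₗ[𝔽] V ⊗[𝔽] V) : Prop :=
  ∀ a b : V, D (a * b) = ract2 𝔽 V b (D a) + lact2 𝔽 V a (D b)

/-- `D` and `E` strongly commute: `D_L ∘ E = E_R ∘ D`. -/
def StronglyComm (D E : V →ₗ[𝔽] V ⊗[𝔽] V) : Prop :=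
  ∀ f : V, LinearMap.rTensor V D (E f) =
    (TensorProduct.assoc 𝔽 V V V).symm (LinearMap.lTensor V E (D f))


section Aux
variable {𝔽 : Type} [Field 𝔽] {V : Type} [Ring V] [Algebra 𝔽 V]

lemma bullet_tmul (u v x y : V) :
    bullet 𝔽 V (u ⊗ₜ v) (x ⊗ₜ y) = (u*x) ⊗ₜ (y*v) := by simp [bullet]

lemma bullet_one_left (X : V ⊗[𝔽] V) : bullet 𝔽 V (1 ⊗ₜ 1) X = X := by
  induction X using TensorProduct.induction_on with
  | zero => simp
  | tmul x y => simp [bullet_tmul]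
  | add a b ha hb => simp [ha, hb]

lemma bullet_one_right (X : V ⊗[𝔽] V) : bullet 𝔽 V X (1 ⊗ₜ 1) = X := by
  induction X using TensorProduct.induction_on with
  | zero => simp
  | tmul x y => simp [bullet_tmul]
  | add a b ha hb => simp [ha, hb]

lemma bullet_assoc (A B C : V ⊗[𝔽] V) :
    bullet 𝔽 V (bullet 𝔽 V A B) C = bullet 𝔽 V A (bullet 𝔽 V B C) := by
  induction A using TensorProduct.induction_on with
  | zero => simp
  | add a b ha hb => simp [ha, hb]
  | tmul u v =>
    induction B using TensorProduct.induction_on with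
    | zero => simp
    | add a b ha hb => simp [ha, hb]
    | tmul x y =>
      induction C using TensorProduct.induction_on with
      | zero => simp
      | add a b ha hb => simp [ha, hb]
      | tmul p q => simp [bullet_tmul, mul_assoc]

lemma ract2_eq_bullet (h : V) (X : V ⊗[𝔽] V) :
    ract2 𝔽 V h X = bullet 𝔽 V (1 ⊗ₜ h) X := by
  induction X using TensorProduct.induction_on with
  | zero => simp
  | tmul x y => simp [ract2, bullet_tmul]
  | add a b ha hb => simp [ha, hb]

lemma lact2_eq_bullet (a : V) (X : V ⊗[𝔽] V) :
    lact2 𝔽 V a X = bullet 𝔽 V (a ⊗ₜ 1) X := by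
  induction X using TensorProduct.induction_on with
  | zero => simp
  | tmul x y => simp [lact2, bullet_tmul]
  | add a b ha hb => simp [ha, hb]

lemma star1r_eq_bullet (b : V) (X : V ⊗[𝔽] V) :
    star1r 𝔽 V b X = bullet 𝔽 V X (b ⊗ₜ 1) := by
  induction X using TensorProduct.induction_on with
  | zero => simp
  | tmul x y => simp [star1r, bullet_tmul]
  | add a b ha hb => simp [ha, hb]

lemma star1l_eq_bullet (a : V) (X : V ⊗[𝔽] V) :
    star1l 𝔽 V a X = bullet 𝔽 V X (1 ⊗ₜ a) := by
  induction X using TensorProduct.induction_on with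
  | zero => simp
  | tmul x y => simp [star1l, bullet_tmul]
  | add a b ha hb => simp [ha, hb]

lemma swap2_ract2 (b : V) (T : V ⊗[𝔽] V) :
    swap2 𝔽 V (ract2 𝔽 V b T) = bullet 𝔽 V (swap2 𝔽 V T) (b ⊗ₜ 1) := by
  induction T using TensorProduct.induction_on with
  | zero => simp
  | tmul x y => simp [ract2, bullet_tmul]
  | add a c ha hc => simp [ha, hc]

lemma swap2_lact2 (a : V) (T : V ⊗[𝔽] V) :
    swap2 𝔽 V (lact2 𝔽 V a T) = bullet 𝔽 V (swap2 𝔽 V T) (1 ⊗ₜ a) := by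
  induction T using TensorProduct.induction_on with
  | zero => simp
  | tmul x y => simp [lact2, bullet_tmul]
  | add a c ha hc => simp [ha, hc]

lemma ract2_one (X : V ⊗[𝔽] V) : ract2 𝔽 V 1 X = X := by
  simp [ract2]
lemma lact2_one (X : V ⊗[𝔽] V) : lact2 𝔽 V 1 X = X := by
  simp [lact2]
lemma star1r_one (X : V ⊗[𝔽] V) : star1r 𝔽 V 1 X = X := by
  simp [star1r]
lemma star1l_one (X : V ⊗[𝔽] V) : star1l 𝔽 V 1 X = X := by
  simp [star1l]

end Aux
section Aux2
variable {𝔽 : Type} [Field 𝔽] {V : Type} [Ring V] [Algebra 𝔽 V]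

lemma bullet_ract2 (h : V) (X B S : V ⊗[𝔽] V) :
    bullet 𝔽 V (bullet 𝔽 V (ract2 𝔽 V h X) B) S =
      ract2 𝔽 V h (bullet 𝔽 V (bullet 𝔽 V X B) S) := by
  simp only [ract2_eq_bullet, bullet_assoc]

lemma bullet_lact2 (a : V) (X B S : V ⊗[𝔽] V) :
    bullet 𝔽 V (bullet 𝔽 V (lact2 𝔽 V a X) B) S =
      lact2 𝔽 V a (bullet 𝔽 V (bullet 𝔽 V X B) S) := by
  simp only [lact2_eq_bullet, bullet_assoc]

lemma bullet_star1r (b : V) (X B S : V ⊗[𝔽] V) :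
    bullet 𝔽 V (bullet 𝔽 V X B) (bullet 𝔽 V S (b ⊗ₜ 1)) =
      star1r 𝔽 V b (bullet 𝔽 V (bullet 𝔽 V X B) S) := by
  simp only [star1r_eq_bullet, bullet_assoc]

lemma bullet_star1l (a : V) (X B S : V ⊗[𝔽] V) :
    bullet 𝔽 V (bullet 𝔽 V X B) (bullet 𝔽 V S (1 ⊗ₜ a)) =
      star1l 𝔽 V a (bullet 𝔽 V (bullet 𝔽 V X B) S) := by
  simp only [star1l_eq_bullet, bullet_assoc]

end Aux2


/-- every 2-fold bracket on the free algebra `R_ℓ` is given by the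
master formula `{{f,g}} = Σ_{i,j} (∂g/∂x_j) • {{x_i,x_j}} • ((∂f/∂x_i))^σ`. -/
theorem statement_10 (𝔽 : Type) [Field 𝔽] [CharZero 𝔽] (ℓ : ℕ)
    (Br : FreeAlgebra 𝔽 (Fin ℓ) →ₗ[𝔽] FreeAlgebra 𝔽 (Fin ℓ) →ₗ[𝔽]
      FreeAlgebra 𝔽 (Fin ℓ) ⊗[𝔽] FreeAlgebra 𝔽 (Fin ℓ))
    (hBr : IsDoubleBracket 𝔽 (FreeAlgebra 𝔽 (Fin ℓ)) Br)
    (D : Fin ℓ → (FreeAlgebra 𝔽 (Fin ℓ) →ₗ[𝔽] FreeAlgebra 𝔽 (Fin ℓ) ⊗[𝔽] FreeAlgebra 𝔽 (Fin ℓ)))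
    (hD : ∀ i, Is2Deriv (D i))
    (hgen : ∀ i k, D i (FreeAlgebra.ι 𝔽 k) =
      if i = k then (1 : FreeAlgebra 𝔽 (Fin ℓ)) ⊗ₜ[𝔽] (1 : FreeAlgebra 𝔽 (Fin ℓ)) else 0)
    (f g : FreeAlgebra 𝔽 (Fin ℓ)) :
    Br f g = ∑ i : Fin ℓ, ∑ j : Fin ℓ,
      bullet 𝔽 (FreeAlgebra 𝔽 (Fin ℓ))
        (bullet 𝔽 (FreeAlgebra 𝔽 (Fin ℓ)) (D j g) (Br (FreeAlgebra.ι 𝔽 i) (FreeAlgebra.ι 𝔽 j)))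
        (swap2 𝔽 (FreeAlgebra 𝔽 (Fin ℓ)) (D i f)) := by
  obtain ⟨hL, hR⟩ := hBr
  have hBrr1 : ∀ a, Br a (1 : FreeAlgebra 𝔽 (Fin ℓ)) = 0 := by
    intro a
    have h := hL a 1 1
    rw [mul_one, ract2_one, lact2_one] at h
    exact left_eq_add.mp h
  have hBrl1 : ∀ c, Br (1 : FreeAlgebra 𝔽 (Fin ℓ)) c = 0 := by
    intro c
    have h := hR 1 1 c
    rw [mul_one, star1r_one, star1l_one] at h
    exact left_eq_add.mp h
  have hD1 : ∀ i, D i (1 : FreeAlgebra 𝔽 (Fin ℓ)) = 0 := by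
    intro i
    have h := hD i 1 1
    rw [mul_one, ract2_one, lact2_one] at h
    exact left_eq_add.mp h
  induction f using FreeAlgebra.induction generalizing g with
  | grade0 r =>
    simp [Algebra.algebraMap_eq_smul_one, map_smul, LinearMap.smul_apply, hBrl1, hD1]
  | add a b ha hb =>
    simp only [map_add, LinearMap.add_apply, ha g, hb g, Finset.sum_add_distrib]
  | mul a b ha hb =>
    have hDab : ∀ i, swap2 𝔽 (FreeAlgebra 𝔽 (Fin ℓ)) (D i (a * b)) =
        bullet 𝔽 _ (swap2 𝔽 _ (D i a)) (b ⊗ₜ 1) +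
          bullet 𝔽 _ (swap2 𝔽 _ (D i b)) (1 ⊗ₜ a) := by
      intro i
      rw [hD i a b, map_add, swap2_ract2, swap2_lact2]
    rw [hR a b g, ha g, hb g]
    simp only [hDab, map_add, bullet_star1r, bullet_star1l, Finset.sum_add_distrib, map_sum]
  | grade1 i0 =>
    induction g using FreeAlgebra.induction with
    | grade0 r =>
      simp [Algebra.algebraMap_eq_smul_one, map_smul, LinearMap.smul_apply, hBrr1, hD1]
    | add g h hg hh =>
      simp only [map_add, LinearMap.add_apply, hg, hh, Finset.sum_add_distrib]
    | mul g h hg hh =>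
      have hDgh : ∀ j, D j (g * h) =
          ract2 𝔽 _ h (D j g) + lact2 𝔽 _ g (D j h) := fun j => hD j g h
      rw [hL _ g h, hg, hh]
      simp only [hDgh, map_add, LinearMap.add_apply, bullet_ract2, bullet_lact2,
        Finset.sum_add_distrib, map_sum]
    | grade1 j0 =>
      rw [Finset.sum_eq_single i0]
      · rw [Finset.sum_eq_single j0]
        · simp [hgen, bullet_one_left, bullet_one_right]
        · intro j _ hj
          simp [hgen, hj]
        · simp
      · intro i _ hi
        simp [hgen, hi]
      · simp
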